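/- arXiv:1905.11828 — 5 statements merged into one kernel-verified Lean document; each statement's English description precedes it below -/
import Mathlib

section
/- Let v be a vertex of a pseudo tree and let u ∈ Desc(v) \ ID(v). Then every G-neighbor of u that is an ancestor of u belongs to Desc(v) ∪ {v}. (Step in the proof of Theorem 1: such a variable u is eliminated within the subtree rooted at v and hence does not appear as a dimension of v's UTIL message.) -/
/-- `anc par u v` : `u` is an ancestor of `v` in the rooted tree with parent map `par`,
i.e. `(u, v)` lies in the transitive closure of `{(p, c) : par c = some p}`. -/
def anc {V : Type*} (par : V → Option V) (u v : V) : Prop :=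
  Relation.TransGen (fun p c => par c = some p) u v

/-- `desc par v` : the set of descendants of `v`. -/
def desc {V : Type*} (par : V → Option V) (v : V) : Set V := {u | anc par v u}

/-- `children par v` : the set of (tree) children of `v`. -/
def children {V : Type*} (par : V → Option V) (v : V) : Set V := {u | par u = some v}

/-- `apSet par G v` : the (pseudo) parents of `v`, i.e. the G-neighbors of `v`
that are ancestors of `v`. -/
def apSet {V : Type*} (par : V → Option V) (G : SimpleGraph V) (v : V) : Set V :=
  {u | G.Adj u v ∧ anc par u v}

/-- `pcSet par G v` : the pseudo children of `v`, i.e. descendants of `v` that are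
G-neighbors of `v` but whose parent is not `v`. -/
def pcSet {V : Type*} (par : V → Option V) (G : SimpleGraph V) (v : V) : Set V :=
  {u | u ∈ desc par v ∧ G.Adj u v ∧ par u ≠ some v}

/-- `sepSet par G v` : the separator of `v`, i.e. the ancestors of `v` that are
G-adjacent to `v` or to some descendant of `v`. -/
def sepSet {V : Type*} (par : V → Option V) (G : SimpleGraph V) (v : V) : Set V :=
  {u | anc par u v ∧ (G.Adj u v ∨ ∃ w ∈ desc par v, G.Adj u w)}

/-- `idSet par G v` : the interface descendants of `v`, i.e. the descendants of `v`
that are G-adjacent to some element of the separator of `v`. -/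
def idSet {V : Type*} (par : V → Option V) (G : SimpleGraph V) (v : V) : Set V :=
  {u | u ∈ desc par v ∧ ∃ w ∈ sepSet par G v, G.Adj u w}

/-- `evSet par G v c` : the elimination set `EV(v, c) = ((PC(v) ∩ Desc(c)) ∪ {c}) \ ID(v)`. -/
def evSet {V : Type*} (par : V → Option V) (G : SimpleGraph V) (v c : V) : Set V :=
  ((pcSet par G v ∩ desc par c) ∪ {c}) \ idSet par G v

lemma rtg_comparable {V : Type*} (par : V → Option V) :
    ∀ {b p : V}, Relation.ReflTransGen (fun p c => par c = some p) b p →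
    ∀ a : V, Relation.ReflTransGen (fun p c => par c = some p) a p →
      Relation.ReflTransGen (fun p c => par c = some p) a b ∨
      Relation.ReflTransGen (fun p c => par c = some p) b a := by
  intro b p h
  induction h with
  | refl => intro a ha; exact Or.inl ha
  | tail hbq hstep ih =>
    intro a hac
    rcases hac.cases_tail with rfl | ⟨d, had, hd⟩
    · exact Or.inr (hbq.tail hstep)
    · have hdq : some d = _ := hd.symm.trans hstep
      exact ih a (Option.some.inj hdq ▸ had)

lemma anc_comparable {V : Type*} (par : V → Option V) {a b u : V}
    (ha : anc par a u) (hb : anc par b u) :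
    anc par a b ∨ a = b ∨ anc par b a := by
  rcases Relation.TransGen.tail'_iff.mp ha with ⟨p, hap, hpu⟩
  rcases Relation.TransGen.tail'_iff.mp hb with ⟨q, hbq, hqu⟩
  have hpq : p = q := by rw [hpu] at hqu; exact (Option.some.inj hqu.symm).symm
  subst hpq
  rcases rtg_comparable par hbq a hap with h | h
  · rcases (Relation.reflTransGen_iff_eq_or_transGen.mp h) with rfl | h
    · exact Or.inr (Or.inl rfl)
    · exact Or.inl h
  · rcases (Relation.reflTransGen_iff_eq_or_transGen.mp h) with rfl | h
    · exact Or.inr (Or.inl rfl)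
    · exact Or.inr (Or.inr h)

/-- Let `v` be a vertex of a pseudo tree and `u ∈ Desc(v) \ ID(v)`. Then every G-neighbor
of `u` that is an ancestor of `u` belongs to `Desc(v) ∪ {v}`. -/
theorem neighbor_ancestor_of_eliminated_mem_subtree {V : Type*} [Fintype V] (r : V)
    (par : V → Option V) (G : SimpleGraph V)
    (hroot : par r = none) (hne : ∀ v : V, v ≠ r → par v ≠ none)
    (hconn : ∀ v : V, v ≠ r → anc par r v)
    (hPT : ∀ u v : V, G.Adj u v → anc par u v ∨ anc par v u)
    (v u : V) (hu : u ∈ desc par v) (hnid : u ∉ idSet par G v)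
    (w : V) (hadj : G.Adj w u) (hanc : anc par w u) :
    w ∈ desc par v ∪ {v} := by
  rcases anc_comparable par hanc hu with h | rfl | h
  · exfalso
    exact hnid ⟨hu, w, ⟨h, Or.inr ⟨u, hu, hadj⟩⟩, hadj.symm⟩
  · exact Or.inr rfl
  · exact Or.inl h
end

section
/- In a pseudo tree in which every tree edge is a graph edge, for every vertex v and every u ∈ Desc(v): u ∈ ID(v) if and only if the highest neighbor-ancestor h(u) of u is an ancestor of v. (This characterizes exactly which descendant variables survive elimination below v, i.e., the interface descendants of v.) -/
/-- In a pseudo tree in which every tree edge is a graph edge, for every vertex `v` and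
every `u ∈ Desc(v)`: `u ∈ ID(v)` iff the highest neighbor-ancestor `h` of `u` is an
ancestor of `v`. -/
theorem mem_idSet_iff_highest_anc {V : Type*} [Fintype V] (r : V)
    (par : V → Option V) (G : SimpleGraph V)
    (hroot : par r = none) (hne : ∀ v : V, v ≠ r → par v ≠ none)
    (hconn : ∀ v : V, v ≠ r → anc par r v)
    (hPT : ∀ u v : V, G.Adj u v → anc par u v ∨ anc par v u)
    (hTE : ∀ v p : V, par v = some p → G.Adj v p)
    (v u : V) (hu : u ∈ desc par v)
    (h : V) (hh : h ∈ apSet par G u)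
    (hhigh : ∀ w ∈ apSet par G u, w ≠ h → anc par h w) :
    u ∈ idSet par G v ↔ anc par h v := by
  constructor
  · rintro ⟨-, w, ⟨hwv, -⟩, hadj⟩
    have hwu : anc par w u := hwv.trans hu
    have hwap : w ∈ apSet par G u := ⟨hadj.symm, hwu⟩
    by_cases hwh : w = h
    · exact hwh ▸ hwv
    · exact (hhigh w hwap hwh).trans hwv
  · intro hhv
    exact ⟨hu, h, ⟨hhv, Or.inr ⟨u, hu, hh.1⟩⟩, hh.1.symm⟩
end

section
/- In a pseudo tree in which every tree edge is a graph edge, every non-root vertex u satisfies u ∉ ID(h(u)), where h(u) is the highest neighbor-ancestor of u. (Hence each variable is indeed eliminated at its highest (pseudo) parent in generalized non-local elimination.) -/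
lemma anc_iter {V : Type*} {par : V → Option V} {a v : V} (hav : anc par a v) :
    ∃ n : ℕ, 0 < n ∧ (fun o => Option.bind o par)^[n] (some v) = some a := by
  induction hav with
  | single hpv => exact ⟨1, one_pos, by simp [hpv]⟩
  | @tail b c hab hpc ih =>
    obtain ⟨n, hn, hiter⟩ := ih
    refine ⟨n + 1, Nat.succ_pos _, ?_⟩
    rw [Function.iterate_succ_apply]
    simpa [hpc] using hiter

lemma iter_none {V : Type*} {par : V → Option V} (n : ℕ) :
    (fun o => Option.bind o par)^[n] (none : Option V) = none :=
  Function.iterate_fixed rfl n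

lemma iter_root {V : Type*} {par : V → Option V} {r : V} (hroot : par r = none)
    {n : ℕ} (hn : 0 < n) :
    (fun o => Option.bind o par)^[n] (some r) = none := by
  obtain ⟨m, rfl⟩ := Nat.exists_eq_succ_of_ne_zero hn.ne'
  rw [Function.iterate_succ_apply]
  simpa [hroot] using iter_none (par := par) m

lemma not_anc_self {V : Type*} {par : V → Option V} {r : V}
    (hroot : par r = none) (hconn : ∀ v : V, v ≠ r → anc par r v) (v : V) :
    ¬ anc par v v := by
  intro hvv
  obtain ⟨k, hk, hfix⟩ := anc_iter hvv
  have hvr : v ≠ r := by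
    rintro rfl
    rw [iter_root hroot hk] at hfix
    exact Option.some_ne_none v hfix.symm
  obtain ⟨m, hm, hrv⟩ := anc_iter (hconn v hvr)
  have hfixm : (fun o => Option.bind o par)^[k * m] (some v) = some v := by
    rw [Function.iterate_mul]
    exact Function.iterate_fixed hfix m
  have hdecomp : k * m = (k - 1) * m + m := by
    have : m ≤ k * m := Nat.le_mul_of_pos_left m hk
    rw [Nat.sub_one_mul]
    omega
  rw [hdecomp, Function.iterate_add_apply, hrv] at hfixm
  rcases Nat.eq_or_lt_of_le hk with h1 | h2
  · -- k = 1
    simp [← h1] at hfixm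
    exact hvr hfixm.symm
  · have : 0 < (k - 1) * m := Nat.mul_pos (by omega) hm
    rw [iter_root hroot this] at hfixm
    exact Option.some_ne_none v hfixm.symm

/-- In a pseudo tree in which every tree edge is a graph edge, every non-root vertex `u`
satisfies `u ∉ ID(h)`, where `h` is the highest neighbor-ancestor of `u`. -/
theorem not_mem_idSet_of_highest_neighbor_ancestor {V : Type*} [Fintype V] (r : V)
    (par : V → Option V) (G : SimpleGraph V)
    (hroot : par r = none) (hne : ∀ v : V, v ≠ r → par v ≠ none)
    (hconn : ∀ v : V, v ≠ r → anc par r v)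
    (hPT : ∀ u v : V, G.Adj u v → anc par u v ∨ anc par v u)
    (hTE : ∀ v p : V, par v = some p → G.Adj v p)
    (u : V) (hu : u ≠ r)
    (h : V) (hh : h ∈ apSet par G u)
    (hhigh : ∀ w ∈ apSet par G u, w ≠ h → anc par h w) :
    u ∉ idSet par G h := by
  rintro ⟨hdesc, w, ⟨hwh, -⟩, hAdjw⟩
  obtain ⟨hAdj_hu, hanc_hu⟩ := hh
  have irrefl := not_anc_self (par := par) hroot hconn
  -- w is a strict ancestor of h, which is an ancestor of u
  have hwu : anc par w u := hwh.trans hanc_hu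
  -- u adjacent to w: hPT gives anc u w or anc w u; anc u w impossible (cycle)
  have huw : G.Adj w u := hAdjw.symm
  have hwAP : w ∈ apSet par G u := ⟨huw, hwu⟩
  by_cases hwh' : w = h
  · exact irrefl h (hwh' ▸ hwh)
  · exact irrefl h ((hhigh w hwAP hwh').trans hwh)
end

section
/- Let F, G : (Π i, D i) → ℝ and let i₀ ∈ I be an index such that F does not depend on i₀. Then the minimum over all assignments σ of F σ + G σ equals the minimum over all assignments σ of F σ + min_{d ∈ D i₀} G (update σ i₀ d). (Correctness of variable elimination: a variable may be optimally eliminated once all functions involving it have been aggregated, the principle underlying generalized non-local elimination.) -/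
/-- Correctness of variable elimination: if `F` does not depend on index `i₀`, then
`min_σ (F σ + G σ) = min_σ (F σ + min_{d ∈ D i₀} G (update σ i₀ d))`. -/
theorem variable_elimination_correct {I : Type*} [Fintype I] [DecidableEq I]
    (D : I → Type*) [∀ i, Fintype (D i)] [∀ i, Nonempty (D i)]
    (F G : (∀ i, D i) → ℝ) (i₀ : I)
    (hF : ∀ σ τ : ∀ i, D i, (∀ i, i ≠ i₀ → σ i = τ i) → F σ = F τ) :
    (Finset.univ.inf' Finset.univ_nonempty fun σ : ∀ i, D i => F σ + G σ) =
      Finset.univ.inf' Finset.univ_nonempty fun σ : ∀ i, D i =>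
        F σ + Finset.univ.inf' Finset.univ_nonempty fun d : D i₀ =>
          G (Function.update σ i₀ d) := by
  apply le_antisymm
  · rw [Finset.le_inf'_iff]
    intro σ _
    obtain ⟨d, _, hd⟩ := Finset.exists_mem_eq_inf' (Finset.univ_nonempty (α := D i₀))
      (fun d => G (Function.update σ i₀ d))
    rw [hd]
    have hFeq : F (Function.update σ i₀ d) = F σ :=
      hF _ _ (fun i hi => Function.update_of_ne hi _ _)
    calc Finset.univ.inf' Finset.univ_nonempty (fun σ : ∀ i, D i => F σ + G σ)
        ≤ F (Function.update σ i₀ d) + G (Function.update σ i₀ d) :=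
          Finset.inf'_le _ (Finset.mem_univ _)
      _ = F σ + G (Function.update σ i₀ d) := by rw [hFeq]
  · rw [Finset.le_inf'_iff]
    intro σ _
    calc Finset.univ.inf' Finset.univ_nonempty (fun σ : ∀ i, D i =>
          F σ + Finset.univ.inf' Finset.univ_nonempty fun d : D i₀ =>
            G (Function.update σ i₀ d))
        ≤ F σ + Finset.univ.inf' Finset.univ_nonempty (fun d : D i₀ =>
            G (Function.update σ i₀ d)) := Finset.inf'_le _ (Finset.mem_univ _)
      _ ≤ F σ + G σ := by
          apply add_le_add_right
          have h := Finset.inf'_le (b := σ i₀)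
            (fun d : D i₀ => G (Function.update σ i₀ d)) (Finset.mem_univ _)
          rwa [Function.update_eq_self] at h
end

section
/- Let n ≥ 3 and consider the graph G on vertex set {1, …, n} whose edges are {i, i+1} for 1 ≤ i < n together with {1, j} for 3 ≤ j ≤ n, with the rooted tree given by root 1 and par(i) = i − 1 for i ≥ 2. Then this rooted tree is a pseudo tree for G, and for every i with 2 ≤ i ≤ n one has Desc(i) = {i+1, …, n}, ID(i) = {i+1, …, n}, Sep(2) = {1}, and Sep(i) = {1, i−1} for 3 ≤ i ≤ n. In particular Sep(2) ∪ ID(2) ∪ {2} = {1, …, n} has cardinality n, so the UTIL message of agent 2 under generalized non-local elimination carries all n dimensions (memory O(dⁿ) on this chain). -/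
/-- The vertex set `{1, …, n}`. -/
def ChainV (n : ℕ) : Type := {i : ℕ // i ∈ Finset.Icc 1 n}

/-- The parent map of the chain: `par 1 = none` and `par i = i - 1` for `i ≥ 2`. -/
def chainPar (n : ℕ) : ChainV n → Option (ChainV n) := fun v =>
  if h1 : v.val = 1 then none
  else some ⟨v.val - 1, by
    have hv := v.property
    simp only [Finset.mem_Icc] at hv ⊢
    omega⟩

/-- The graph on `{1, …, n}` with edges `{i, i+1}` for `1 ≤ i < n` and `{1, j}` for
`3 ≤ j ≤ n`. -/
def chainG (n : ℕ) : SimpleGraph (ChainV n) :=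
  SimpleGraph.fromRel (fun u v => v.val = u.val + 1 ∨ (u.val = 1 ∧ 3 ≤ v.val))

lemma chainV_bounds {n : ℕ} (u : ChainV n) : 1 ≤ u.val ∧ u.val ≤ n := by
  exact Finset.mem_Icc.mp u.property

lemma chainPar_eq_some {n : ℕ} {u v : ChainV n} :
    chainPar n v = some u ↔ v.val ≠ 1 ∧ u.val = v.val - 1 := by
  unfold chainPar
  split
  · simp_all
  · constructor
    · intro h
      have := (Option.some_inj.mp h)
      exact ⟨by assumption, by rw [← this]⟩
    · rintro ⟨-, h2⟩
      exact congrArg some (Subtype.ext h2.symm)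

lemma anc_iff {n : ℕ} (u v : ChainV n) : anc (chainPar n) u v ↔ u.val < v.val := by
  constructor
  · intro h
    induction h with
    | single h =>
      obtain ⟨h1, h2⟩ := chainPar_eq_some.mp h
      have := chainV_bounds u; omega
    | tail _ h ih =>
      obtain ⟨h1, h2⟩ := chainPar_eq_some.mp h
      rename_i b _
      have := chainV_bounds b; omega
  · intro h
    obtain ⟨k, hk⟩ : ∃ k, v.val = u.val + 1 + k := ⟨v.val - u.val - 1, by omega⟩
    clear h
    induction k generalizing v with
    | zero =>
      have hu := chainV_bounds u
      exact Relation.TransGen.single (chainPar_eq_some.mpr ⟨by omega, by omega⟩)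
    | succ k ih =>
      have hv := chainV_bounds v
      have hu := chainV_bounds u
      have hw : v.val - 1 ∈ Finset.Icc 1 n := by simp [Finset.mem_Icc]; omega
      refine Relation.TransGen.tail (ih ⟨v.val - 1, hw⟩ (by simp; omega)) ?_
      exact chainPar_eq_some.mpr ⟨by omega, rfl⟩

lemma chainG_adj_iff {n : ℕ} (u v : ChainV n) :
    (chainG n).Adj u v ↔ u.val ≠ v.val ∧
      ((v.val = u.val + 1 ∨ (u.val = 1 ∧ 3 ≤ v.val)) ∨
       (u.val = v.val + 1 ∨ (v.val = 1 ∧ 3 ≤ u.val))) := by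
  simp only [chainG, SimpleGraph.fromRel_adj, ne_eq]
  constructor
  · rintro ⟨h, h2⟩; exact ⟨fun e => h (Subtype.ext e), h2⟩
  · rintro ⟨h, h2⟩; exact ⟨fun e => h (congrArg Subtype.val e), h2⟩

instance chainV_fintype (n : ℕ) : Fintype (ChainV n) := by
  unfold ChainV; infer_instance

lemma chainV_card (n : ℕ) : Fintype.card (ChainV n) = n := by
  rw [show Fintype.card (ChainV n) = (Finset.Icc 1 n).card from Fintype.card_coe _]
  simp

/-- On the chain pseudo tree with back edges to the root, for `2 ≤ i ≤ n`:
`Desc(i) = ID(i) = {i+1, …, n}`, `Sep(2) = {1}` and `Sep(i) = {1, i-1}` for `i ≥ 3`;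
hence `Sep(2) ∪ ID(2) ∪ {2} = {1, …, n}` has cardinality `n`. -/
theorem chain_example (n : ℕ) (hn : 3 ≤ n) :
    -- the data form a rooted tree with root 1
    (∀ rt : ChainV n, rt.val = 1 →
      chainPar n rt = none ∧
      (∀ v : ChainV n, v ≠ rt → chainPar n v ≠ none) ∧
      (∀ v : ChainV n, v ≠ rt → anc (chainPar n) rt v)) ∧
    -- and a pseudo tree for the graph `chainG n`
    (∀ u v : ChainV n, (chainG n).Adj u v →
      anc (chainPar n) u v ∨ anc (chainPar n) v u) ∧
    -- `Desc(i) = ID(i) = {i+1, …, n}` for every `2 ≤ i ≤ n`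
    (∀ i : ChainV n, 2 ≤ i.val →
      desc (chainPar n) i = {u : ChainV n | i.val + 1 ≤ u.val} ∧
      idSet (chainPar n) (chainG n) i = {u : ChainV n | i.val + 1 ≤ u.val}) ∧
    -- `Sep(2) = {1}`
    (∀ i : ChainV n, i.val = 2 →
      sepSet (chainPar n) (chainG n) i = {u : ChainV n | u.val = 1}) ∧
    -- `Sep(i) = {1, i-1}` for `3 ≤ i ≤ n`
    (∀ i : ChainV n, 3 ≤ i.val →
      sepSet (chainPar n) (chainG n) i =
        {u : ChainV n | u.val = 1 ∨ u.val = i.val - 1}) ∧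
    -- `Sep(2) ∪ ID(2) ∪ {2} = {1, …, n}` has cardinality `n`
    (∀ i : ChainV n, i.val = 2 →
      sepSet (chainPar n) (chainG n) i ∪ idSet (chainPar n) (chainG n) i ∪ {i} =
        Set.univ ∧
      (sepSet (chainPar n) (chainG n) i ∪ idSet (chainPar n) (chainG n) i ∪
        {i}).ncard = n) := by
  -- descendants
  have hdesc : ∀ i : ChainV n, desc (chainPar n) i = {u : ChainV n | i.val + 1 ≤ u.val} := by
    intro i
    ext u
    simp only [desc, Set.mem_setOf_eq, anc_iff]
    omega
  -- interface descendants
  have hid : ∀ i : ChainV n, 2 ≤ i.val →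
      idSet (chainPar n) (chainG n) i = {u : ChainV n | i.val + 1 ≤ u.val} := by
    intro i hi
    ext u
    simp only [idSet, hdesc, Set.mem_setOf_eq]
    constructor
    · rintro ⟨h, -⟩; exact h
    · intro h
      have hu := chainV_bounds u
      have hone : (1 : ℕ) ∈ Finset.Icc 1 n := by simp [Finset.mem_Icc]; omega
      refine ⟨h, ⟨1, hone⟩, ⟨?_, ?_⟩, ?_⟩
      · exact (anc_iff _ _).2 (by dsimp only; omega)
      · right
        refine ⟨u, ?_, ?_⟩
        · simp only [desc, Set.mem_setOf_eq, anc_iff]; omega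
        · exact (chainG_adj_iff _ _).2 (by dsimp only; omega)
      · exact (chainG_adj_iff _ _).2 (by dsimp only; omega)
  have hsep2 : ∀ i : ChainV n, i.val = 2 →
      sepSet (chainPar n) (chainG n) i = {u : ChainV n | u.val = 1} := by
    intro i hi
    ext u
    have hu := chainV_bounds u
    simp only [sepSet, Set.mem_setOf_eq, anc_iff, hi]
    constructor
    · rintro ⟨h, -⟩; omega
    · intro h
      refine ⟨by omega, Or.inr ?_⟩
      have h3 : (3 : ℕ) ∈ Finset.Icc 1 n := by simp [Finset.mem_Icc]; omega
      refine ⟨⟨3, h3⟩, ?_, ?_⟩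
      · simp only [desc, Set.mem_setOf_eq]; exact (anc_iff _ _).2 (by dsimp only; omega)
      · exact (chainG_adj_iff _ _).2 (by dsimp only; omega)
  refine ⟨?_, ?_, ?_, hsep2, ?_, ?_⟩
  · -- rooted tree
    intro rt hrt
    refine ⟨?_, ?_, ?_⟩
    · unfold chainPar; rw [dif_pos hrt]
    · intro v hv
      have : v.val ≠ 1 := fun h => hv (Subtype.ext (h.trans hrt.symm))
      unfold chainPar; rw [dif_neg this]; simp
    · intro v hv
      have hne : v.val ≠ 1 := fun h => hv (Subtype.ext (h.trans hrt.symm))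
      have hb := chainV_bounds v
      rw [anc_iff]; omega
  · -- pseudo tree
    intro u v h
    rw [chainG_adj_iff] at h
    rw [anc_iff, anc_iff]
    omega
  · -- Desc and ID
    intro i hi
    exact ⟨hdesc i, hid i hi⟩
  · -- Sep(i) = {1, i-1} for i ≥ 3
    intro i hi
    ext u
    have hu := chainV_bounds u
    have hib := chainV_bounds i
    simp only [sepSet, Set.mem_setOf_eq, anc_iff]
    constructor
    · rintro ⟨hlt, hadj | ⟨w, hw, hadj⟩⟩
      · rw [chainG_adj_iff] at hadj
        omega
      · simp only [desc, Set.mem_setOf_eq, anc_iff] at hw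
        rw [chainG_adj_iff] at hadj
        omega
    · rintro (h | h)
      · refine ⟨by omega, Or.inl ?_⟩
        rw [chainG_adj_iff]; omega
      · refine ⟨by omega, Or.inl ?_⟩
        rw [chainG_adj_iff]; omega
  · -- cardinality
    intro i hi
    have huniv : sepSet (chainPar n) (chainG n) i ∪ idSet (chainPar n) (chainG n) i ∪
        {i} = Set.univ := by
      rw [hsep2 i hi, hid i (by omega)]
      ext u
      have hu := chainV_bounds u
      simp only [Set.mem_union, Set.mem_setOf_eq, Set.mem_singleton_iff, Set.mem_univ,
        iff_true, hi]
      rcases Nat.lt_or_ge u.val 2 with h | h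
      · left; left; omega
      · rcases Nat.lt_or_ge u.val 3 with h2 | h2
        · right; exact Subtype.ext (by omega)
        · left; right; omega
    refine ⟨huniv, ?_⟩
    rw [huniv, Set.ncard_univ, Nat.card_eq_fintype_card, chainV_card]
end
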